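/- Let X be a scheme over a field of characteristic p > 0 with absolute Frobenius F : X → X. If the pushforward F_* O_X is locally free as an O_X-module, then X is reduced. -/

import Mathlib

open CategoryTheory AlgebraicGeometry TopologicalSpace

universe u

/-- `φ` is the (absolute) Frobenius endomorphism of the structure sheaf of rings of `X`:
on every open set it is given by `x ↦ x ^ p`. -/
def IsFrobenius (X : Scheme.{u}) (p : ℕ) (φ : X.ringCatSheaf ⟶ X.ringCatSheaf) : Prop :=
  ∀ (U : (Opens X)ᵒᵖ) (x : X.ringCatSheaf.val.obj U), φ.hom.app U x = x ^ p

/-- Pushforward along the absolute Frobenius morphism of `X`: since the Frobenius is the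
identity on the underlying topological space, it is the restriction of scalars along the
Frobenius endomorphism of the structure sheaf. -/
noncomputable def frobPush (X : Scheme.{u}) (φ : X.ringCatSheaf ⟶ X.ringCatSheaf) :
    X.Modules ⥤ X.Modules :=
  SheafOfModules.restrictScalars φ

/-- The structure sheaf `O_X` as a module over itself. -/
noncomputable def structureModule (X : Scheme.{u}) : X.Modules := SheafOfModules.unit _

/-- The restriction of a sheaf of modules on `X` to an open subset `U`, as a presheaf of
modules over the restriction of the structure sheaf. -/
noncomputable def restrictOpen (X : Scheme.{u}) (U : X.Opens) (M : X.Modules) :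
    PresheafOfModules.{u}
      ((U.isOpenEmbedding'.isOpenMap.functor (f := U.inclusion')).op ⋙ X.ringCatSheaf.val) :=
  (PresheafOfModules.pushforward₀ _ _).obj M.val

/-- A sheaf of modules on `X` is locally free if every point has an open neighbourhood over
which it is isomorphic to a free module. -/
def IsLocallyFree (X : Scheme.{u}) (M : X.Modules) : Prop :=
  ∀ x : X, ∃ (U : X.Opens) (_ : x ∈ U) (ι : Type u),
    Nonempty (restrictOpen X U M ≅ restrictOpen X U (SheafOfModules.free ι))

set_option maxHeartbeats 1000000 in
/-- If `X` is a scheme over a field of characteristic `p > 0` such that the pushforward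
`F_* O_X` of the structure sheaf along the absolute Frobenius is locally free as an
`O_X`-module, then `X` is reduced. -/
theorem reduced_of_frobenius_pushforward_locallyFree
    (k : Type u) [Field k] (p : ℕ) (hp : p.Prime) [CharP k p]
    (X : Scheme.{u}) (f : X ⟶ Spec (CommRingCat.of k))
    (φ : X.ringCatSheaf ⟶ X.ringCatSheaf) (hφ : IsFrobenius X p φ)
    (hfree : IsLocallyFree X ((frobPush X φ).obj (structureModule X))) :
    IsReduced X := by
  have key : ∀ (U : Opens X) (x : X.presheaf.obj (Opposite.op U)), x ^ p = 0 →
      ∀ u : X, u ∈ U → ∃ (W : Opens X) (hWU : W ≤ U), u ∈ W ∧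
        X.presheaf.map (homOfLE hWU).op x = 0 := by
    intro U x hx u hu
    obtain ⟨V, hv, ι, ⟨e⟩⟩ := hfree u
    let F := (V.isOpenEmbedding'.isOpenMap.functor (f := V.inclusion'))
    let W0 : Opens V := (Opens.map V.inclusion').obj U
    let W : Opens X := F.obj W0
    have hWU : W ≤ U := by rintro y ⟨w, hw, rfl⟩; exact hw
    have huW : u ∈ W := ⟨⟨u, hv⟩, hu, rfl⟩
    refine ⟨W, hWU, huW, ?_⟩
    set x' : X.ringCatSheaf.val.obj (Opposite.op W) :=
      X.ringCatSheaf.val.map (homOfLE hWU).op x with hx'def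
    show x' = 0
    have hx' : x' ^ p = 0 := by
      calc x' ^ p = (X.ringCatSheaf.val.map (homOfLE hWU).op).hom (x ^ p) := (map_pow _ x p).symm
        _ = 0 := by rw [hx]; exact map_zero _
    -- the evaluated modules
    set A := (restrictOpen X V ((frobPush X φ).obj (structureModule X))).obj (Opposite.op W0) with hA
    set B := (restrictOpen X V (SheafOfModules.free ι)).obj (Opposite.op W0) with hB
    have hAkill : ∀ a : A, x' • a = 0 := by
      intro a
      let a' : X.ringCatSheaf.val.obj (Opposite.op W) := a
      have h1 : x' • a = x' ^ p * a' := by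
        show φ.hom.app (Opposite.op W) x' * a' = x' ^ p * a'
        rw [hφ]
      rw [h1, hx', zero_mul]; rfl
    have hbb : e.inv.app (Opposite.op W0) ≫ e.hom.app (Opposite.op W0) = 𝟙 B := by
      rw [← PresheafOfModules.comp_app, e.inv_hom_id, PresheafOfModules.id_app]
    have hBkill : ∀ b : B, x' • b = 0 := by
      intro b
      have h2 : e.hom.app (Opposite.op W0) (e.inv.app (Opposite.op W0) b) = b := by
        have := ConcreteCategory.congr_hom hbb b
        exact this
      calc x' • b = x' • e.hom.app (Opposite.op W0) (e.inv.app (Opposite.op W0) b) := by rw [h2]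
        _ = e.hom.app (Opposite.op W0) (x' • e.inv.app (Opposite.op W0) b) := (map_smul _ _ _).symm
        _ = e.hom.app (Opposite.op W0) 0 := by rw [hAkill]
        _ = 0 := map_zero _
    obtain hι | hι := isEmpty_or_nonempty ι
    · -- free ι is trivial
      have hid : (𝟙 (SheafOfModules.free (R := X.ringCatSheaf) ι)) = 0 :=
        Limits.Sigma.hom_ext _ _ (fun i => isEmptyElim i)
      have hval : (𝟙 ((SheafOfModules.free (R := X.ringCatSheaf) ι).val)) = 0 := by
        calc (𝟙 ((SheafOfModules.free (R := X.ringCatSheaf) ι).val))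
            = ((𝟙 (SheafOfModules.free (R := X.ringCatSheaf) ι) :
                SheafOfModules.free ι ⟶ SheafOfModules.free ι)).val := rfl
          _ = ((0 : SheafOfModules.free (R := X.ringCatSheaf) ι ⟶ SheafOfModules.free ι)).val := by
              rw [hid]
          _ = 0 := Functor.map_zero (SheafOfModules.forget _) _ _
      have hB0 : ∀ b : B, b = 0 := by
        intro b
        let b' : (SheafOfModules.free (R := X.ringCatSheaf) ι).val.obj (Opposite.op W) := b
        have h1 : PresheafOfModules.Hom.app
            (𝟙 ((SheafOfModules.free (R := X.ringCatSheaf) ι).val)) (Opposite.op W) b' = b' := by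
          rw [PresheafOfModules.id_app]
          rfl
        rw [hval] at h1
        have h1' : b' = 0 := by simpa using h1.symm
        exact h1'
      have haa : e.hom.app (Opposite.op W0) ≫ e.inv.app (Opposite.op W0) = 𝟙 A := by
        rw [← PresheafOfModules.comp_app, e.hom_inv_id, PresheafOfModules.id_app]
      have hA0 : ∀ a : A, a = 0 := by
        intro a
        have h2 : e.hom.app (Opposite.op W0) a = 0 := hB0 _
        have h3 : e.inv.app (Opposite.op W0) (e.hom.app (Opposite.op W0) a) = a := by
          have := ConcreteCategory.congr_hom haa a
          exact this
        rw [h2, map_zero] at h3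
        exact h3.symm
      exact hA0 x'
    · obtain ⟨i⟩ := hι
      let uι : SheafOfModules.unit X.ringCatSheaf ⟶ SheafOfModules.free ι :=
        Limits.Sigma.ι (fun (_ : ι) => SheafOfModules.unit X.ringCatSheaf) i
      let rι : SheafOfModules.free ι ⟶ SheafOfModules.unit X.ringCatSheaf :=
        Limits.Sigma.desc (fun _ => 𝟙 _)
      have hur : uι ≫ rι = 𝟙 _ := Limits.Sigma.ι_desc _ _
      have hcomp : ∀ (c : X.ringCatSheaf.val.obj (Opposite.op W)),
          rι.val.app (Opposite.op W) (uι.val.app (Opposite.op W) c) = c := by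
        intro c
        have : uι.val ≫ rι.val = 𝟙 _ := by
          rw [show uι.val ≫ rι.val = (uι ≫ rι).val from rfl, hur]; rfl
        have h3 : PresheafOfModules.Hom.app (uι.val ≫ rι.val) (Opposite.op W) c = c := by
          rw [this, PresheafOfModules.id_app]
          rfl
        rw [PresheafOfModules.comp_app] at h3
        exact h3
      have h4 : uι.val.app (Opposite.op W) x' = x' • uι.val.app (Opposite.op W) (1 : X.ringCatSheaf.val.obj (Opposite.op W)) := by
        refine Eq.trans ?_ (map_smul (uι.val.app (Opposite.op W)).hom x' _)
        congr 1
        exact (mul_one x').symm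
      have h5 : (x' • uι.val.app (Opposite.op W) (1 : X.ringCatSheaf.val.obj (Opposite.op W)) : B) = 0 := hBkill _
      have h6 : uι.val.app (Opposite.op W) x' = 0 := by rw [h4]; exact h5
      have := hcomp x'
      rw [h6, map_zero] at this
      exact this.symm
  have keyp : ∀ (U : Opens X) (x : X.presheaf.obj (Opposite.op U)), x ^ p = 0 → x = 0 := by
    intro U x hx
    choose W hWU huW hres using fun (u : U) => key U x hx u u.2
    refine X.sheaf.eq_of_locally_eq' W U (fun u => homOfLE (hWU u)) ?_ x 0 ?_
    · intro y hy
      exact Opens.mem_iSup.mpr ⟨⟨y, hy⟩, huW _⟩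
    · intro i
      rw [map_zero]
      exact hres i
  refine ⟨fun U => ⟨fun s hs => ?_⟩⟩
  obtain ⟨n, hn⟩ := hs
  have hpow : ∀ (m : ℕ) (y : X.presheaf.obj (Opposite.op U)), y ^ (p ^ m) = 0 → y = 0 := by
    intro m
    induction m with
    | zero => intro y hy; simpa using hy
    | succ m ih =>
        intro y hy
        refine keyp U y (ih (y ^ p) ?_)
        rw [← pow_mul, ← pow_succ']
        exact hy
  exact hpow n s (pow_eq_zero_of_le (Nat.lt_pow_self (n := n) hp.one_lt).le hn)
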